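/- Successive compute-and-forward loses at most half a bit per stage: let σ² > 0 and let a₁, a₂, …, a_m be nonnegative reals. Then Σ_{i=1}^{m} C⁺( a_i / (σ² + Σ_{j=i+1}^{m} a_j) − 1/2 ) ≥ C( (Σ_{i=1}^{m} a_i) / σ² ) − m/2, where C(x) = (1/2)·log₂(1 + x) and C⁺(y) = max{0, (1/2)·log₂(1 + y)}. That is, when the relay successively decodes m modulo-lattice sums of powers a₁, …, a_m (treating not-yet-decoded signals as noise, each stage subject to the lattice rate constraint of Lemma 1), the achievable sum of rates is within m/2 bits of C of the total received SNR. -/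

import Mathlib

/-- The Gaussian capacity function `C(x) = (1/2)·log₂(1 + x)`. -/
noncomputable def gaussC (x : ℝ) : ℝ := (1 / 2) * Real.logb 2 (1 + x)

/-- Its positive part `C⁺(x) = max {0, C(x)}`. -/
noncomputable def gaussCplus (x : ℝ) : ℝ := max 0 (gaussC x)

lemma key (σ2 R a0 : ℝ) (hσ : 0 < σ2) (hR : 0 ≤ R) (ha : 0 ≤ a0) :
    gaussCplus (a0 / (σ2 + R) - 1 / 2) ≥
      gaussC ((a0 + R) / σ2) - gaussC (R / σ2) - 1 / 2 := by
  have hN : 0 < σ2 + R := by linarith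
  have h1 : gaussCplus (a0 / (σ2 + R) - 1 / 2) ≥ gaussC (a0 / (σ2 + R) - 1 / 2) :=
    le_max_right _ _
  have h2 : gaussC (a0 / (σ2 + R) - 1 / 2) ≥
      (1 / 2) * Real.logb 2 ((σ2 + R + a0) / (2 * (σ2 + R))) := by
    unfold gaussC
    have hxy : (σ2 + R + a0) / (2 * (σ2 + R)) ≤ 1 + (a0 / (σ2 + R) - 1 / 2) := by
      have hc : a0 / (σ2 + R) * (σ2 + R) = a0 := div_mul_cancel₀ a0 hN.ne'
      rw [div_le_iff₀ (by positivity)]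
      nlinarith [hc]
    have hx : (0:ℝ) < (σ2 + R + a0) / (2 * (σ2 + R)) := by positivity
    linarith [Real.logb_le_logb_of_le (by norm_num : (1:ℝ) < 2) hx hxy]
  have h3 : (1 / 2) * Real.logb 2 ((σ2 + R + a0) / (2 * (σ2 + R))) =
      gaussC ((a0 + R) / σ2) - gaussC (R / σ2) - 1 / 2 := by
    unfold gaussC
    have e1 : (1:ℝ) + (a0 + R) / σ2 = (σ2 + a0 + R) / σ2 := by field_simp; ring
    have e2 : (1:ℝ) + R / σ2 = (σ2 + R) / σ2 := by field_simp
    rw [e1, e2]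
    have l1 : Real.logb 2 ((σ2 + R + a0) / (2 * (σ2 + R))) =
        Real.logb 2 (σ2 + R + a0) - Real.logb 2 (2 * (σ2 + R)) :=
      Real.logb_div (by positivity) (by positivity)
    have l2 : Real.logb 2 (2 * (σ2 + R)) = 1 + Real.logb 2 (σ2 + R) := by
      rw [Real.logb_mul (by norm_num) (by positivity)]
      simp [Real.logb_self_eq_one]
    have l3 : Real.logb 2 ((σ2 + a0 + R) / σ2) =
        Real.logb 2 (σ2 + a0 + R) - Real.logb 2 σ2 :=
      Real.logb_div (by positivity) (by positivity)
    have l4 : Real.logb 2 ((σ2 + R) / σ2) =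
        Real.logb 2 (σ2 + R) - Real.logb 2 σ2 :=
      Real.logb_div (by positivity) (by positivity)
    have e3 : σ2 + R + a0 = σ2 + a0 + R := by ring
    rw [l1, l2, l3, l4, e3]; ring
  linarith

/-- Successive compute-and-forward loses at most half a bit
per stage: with noise variance `σ² > 0` and nonnegative stage powers
`a 1, …, a m`,
`Σ_i C⁺(a i / (σ² + Σ_{j>i} a j) − 1/2) ≥ C((Σ_i a i) / σ²) − m/2`. -/
theorem successive_compute_forward_gap
    (σ2 : ℝ) (hσ2 : 0 < σ2) (m : ℕ) (a : Fin m → ℝ) (ha : ∀ i, 0 ≤ a i) :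
    ∑ i : Fin m, gaussCplus (a i / (σ2 + ∑ j ∈ Finset.Ioi i, a j) - 1 / 2) ≥
      gaussC ((∑ i : Fin m, a i) / σ2) - m / 2 := by

  induction m with
  | zero =>
      simp [gaussC]
  | succ n ih =>
      have hR : 0 ≤ ∑ j : Fin n, a j.succ := Finset.sum_nonneg fun j _ => ha _
      rw [Fin.sum_univ_succ, Fin.sum_univ_succ]
      have esum : ∀ i : Fin n, (∑ j ∈ Finset.Ioi (Fin.succ i), a j)
          = ∑ j ∈ Finset.Ioi i, a j.succ := fun i => Fin.sum_Ioi_succ a i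
      have e0 : (∑ j ∈ Finset.Ioi (0 : Fin (n+1)), a j) = ∑ j : Fin n, a j.succ :=
        Fin.sum_Ioi_zero a
      have ihs := ih (fun j => a j.succ) (fun j => ha _)
      calc gaussCplus (a 0 / (σ2 + ∑ j ∈ Finset.Ioi (0:Fin (n+1)), a j) - 1 / 2) +
            ∑ i : Fin n, gaussCplus (a i.succ / (σ2 + ∑ j ∈ Finset.Ioi i.succ, a j) - 1 / 2)
          ≥ (gaussC ((a 0 + ∑ j : Fin n, a j.succ) / σ2) - gaussC ((∑ j : Fin n, a j.succ) / σ2)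
              - 1 / 2) + (gaussC ((∑ j : Fin n, a j.succ) / σ2) - n / 2) := by
            apply add_le_add
            · rw [e0]; exact key σ2 _ (a 0) hσ2 hR (ha 0)
            · simp only [esum]; exact ihs
        _ = gaussC ((a 0 + ∑ j : Fin n, a j.succ) / σ2) - (↑(n+1)) / 2 := by
            push_cast; ring
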